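/- For each fixed φ ∈ (0, π/2), ∫₀^{π} sin φ / (1 - cos²x cos²φ)^{3/2} dx = 2 E(-cot²φ), where E(m) = ∫₀^{π/2} √(1 - m sin²θ) dθ. -/

import Mathlib

open Real intervalIntegral

lemma deriv_aux (k s : ℝ) (hs : 0 < s) (hsk : s^2 = 1 - k^2) (x : ℝ) :
    HasDerivAt (fun x => k^2 * (Real.sin x * Real.cos x) / (s * Real.sqrt (1 - Real.cos x ^ 2 * k^2)))
      (s / (1 - Real.cos x ^ 2 * k^2) ^ ((3:ℝ)/2) - Real.sqrt (1 - Real.cos x ^ 2 * k^2) / s) x := by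
  have hD : 0 < 1 - Real.cos x ^ 2 * k^2 := by
    nlinarith [Real.cos_sq_le_one x, sq_nonneg (Real.cos x), sq_nonneg s, sq_nonneg k,
      sq_nonneg (Real.cos x * k)]
  have hu0 : 0 < Real.sqrt (1 - Real.cos x ^ 2 * k^2) := Real.sqrt_pos.mpr hD
  have hu2 : Real.sqrt (1 - Real.cos x ^ 2 * k^2) ^ 2 = 1 - Real.cos x ^ 2 * k ^ 2 :=
    Real.sq_sqrt hD.le
  have hf : HasDerivAt (fun x => 1 - Real.cos x ^ 2 * k^2)
      (-(2 * Real.cos x ^ 1 * (-Real.sin x) * k^2)) x :=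
    ((Real.hasDerivAt_cos x).pow 2).mul_const _ |>.const_sub 1
  have hu : HasDerivAt (fun x => Real.sqrt (1 - Real.cos x ^ 2 * k^2))
      ((-(2 * Real.cos x ^ 1 * (-Real.sin x) * k^2)) /
        (2 * Real.sqrt (1 - Real.cos x ^ 2 * k^2))) x := hf.sqrt hD.ne'
  have hN : HasDerivAt (fun x => k^2 * (Real.sin x * Real.cos x))
      (k^2 * (Real.cos x * Real.cos x + Real.sin x * -Real.sin x)) x :=
    ((Real.hasDerivAt_sin x).mul (Real.hasDerivAt_cos x)).const_mul _
  have hne : s * Real.sqrt (1 - Real.cos x ^ 2 * k^2) ≠ 0 := by positivity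
  have hG := hN.div (hu.const_mul s) hne
  convert hG using 1
  · rfl
  · rfl
  · rfl
  have h32 : (1 - Real.cos x ^ 2 * k^2) ^ ((3:ℝ)/2)
      = Real.sqrt (1 - Real.cos x ^ 2 * k^2) ^ 3 := by
    rw [Real.sqrt_eq_rpow, ← Real.rpow_natCast ((1 - Real.cos x ^2*k^2) ^ ((1:ℝ)/2)) 3,
      ← Real.rpow_mul hD.le]
    norm_num
  rw [h32]
  have hd2 : Real.sin x ^ 2 = 1 - Real.cos x ^ 2 := by
    have := Real.sin_sq_add_cos_sq x; linarith
  set u := Real.sqrt (1 - Real.cos x ^ 2 * k^2) with hu'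
  have key : s^2 - u^4 = k^2*(Real.cos x ^2 - Real.sin x ^2)*u^2 - k^4*Real.cos x ^2*Real.sin x ^2 := by
    rw [show u^4 = (u^2)^2 by ring, hu2, hd2, hsk]; ring
  field_simp
  linear_combination key

noncomputable def Ell (m : ℝ) : ℝ := ∫ θ in (0 : ℝ)..(π / 2), Real.sqrt (1 - m * Real.sin θ ^ 2)

theorem integral_eq_elliptic (φ : ℝ) (hφ : φ ∈ Set.Ioo 0 (π / 2)) :
    (∫ x in (0 : ℝ)..π,
        Real.sin φ / (1 - Real.cos x ^ 2 * Real.cos φ ^ 2) ^ ((3 : ℝ) / 2)) =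
      2 * Ell (-(Real.cos φ / Real.sin φ) ^ 2) := by
  obtain ⟨hφ0, hφ2⟩ := hφ
  have hπ := Real.pi_pos
  have hs : 0 < Real.sin φ := Real.sin_pos_of_pos_of_lt_pi hφ0 (by linarith)
  have hsk : Real.sin φ ^ 2 = 1 - Real.cos φ ^ 2 := by
    have := Real.sin_sq_add_cos_sq φ; linarith
  set s := Real.sin φ with hsdef
  set k := Real.cos φ with hkdef
  have hD : ∀ x : ℝ, 0 < 1 - Real.cos x ^ 2 * k ^ 2 := fun x => by
    nlinarith [Real.cos_sq_le_one x, sq_nonneg (Real.cos x), sq_nonneg (Real.cos x * k)]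
  have hcontD : Continuous fun x : ℝ => 1 - Real.cos x ^ 2 * k ^ 2 := by continuity
  have hcont1 : Continuous fun x : ℝ => s / (1 - Real.cos x ^ 2 * k ^ 2) ^ ((3:ℝ)/2) := by
    apply continuous_const.div (hcontD.rpow_const fun x => Or.inr (by norm_num))
    intro x
    exact (Real.rpow_pos_of_pos (hD x) _).ne'
  have hcont2 : Continuous fun x : ℝ => Real.sqrt (1 - Real.cos x ^ 2 * k ^ 2) / s :=
    (hcontD.sqrt).div_const s
  -- symmetry: integral over [0,π] is twice integral over [0,π/2]
  have hsym : (∫ x in (0:ℝ)..π, s / (1 - Real.cos x ^ 2 * k ^ 2) ^ ((3:ℝ)/2))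
      = 2 * ∫ x in (0:ℝ)..(π/2), s / (1 - Real.cos x ^ 2 * k ^ 2) ^ ((3:ℝ)/2) := by
    rw [← intervalIntegral.integral_add_adjacent_intervals (a := (0:ℝ)) (b := π/2) (c := π)
      (hcont1.intervalIntegrable _ _) (hcont1.intervalIntegrable _ _)]
    have h := intervalIntegral.integral_comp_sub_left (a := (0:ℝ)) (b := π/2)
      (fun x => s / (1 - Real.cos x ^ 2 * k ^ 2) ^ ((3:ℝ)/2)) π
    simp only [Real.cos_pi_sub, neg_sq, sub_zero] at h
    rw [show π - π/2 = π/2 by ring] at h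
    rw [← h]; ring
  -- FTC: the difference integrates to zero
  have hzero : (∫ x in (0:ℝ)..(π/2),
      (s / (1 - Real.cos x ^ 2 * k ^ 2) ^ ((3:ℝ)/2)
        - Real.sqrt (1 - Real.cos x ^ 2 * k ^ 2) / s)) = 0 := by
    rw [intervalIntegral.integral_eq_sub_of_hasDerivAt
      (fun x _ => deriv_aux k s hs hsk x) ((hcont1.sub hcont2).intervalIntegrable _ _)]
    simp
  have hsplit : (∫ x in (0:ℝ)..(π/2), s / (1 - Real.cos x ^ 2 * k ^ 2) ^ ((3:ℝ)/2))
      = ∫ x in (0:ℝ)..(π/2), Real.sqrt (1 - Real.cos x ^ 2 * k ^ 2) / s := by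
    have h : (∫ x in (0:ℝ)..(π/2),
        (s / (1 - Real.cos x ^ 2 * k ^ 2) ^ ((3:ℝ)/2)
          - Real.sqrt (1 - Real.cos x ^ 2 * k ^ 2) / s))
        = (∫ x in (0:ℝ)..(π/2), s / (1 - Real.cos x ^ 2 * k ^ 2) ^ ((3:ℝ)/2))
          - ∫ x in (0:ℝ)..(π/2), Real.sqrt (1 - Real.cos x ^ 2 * k ^ 2) / s :=
      intervalIntegral.integral_sub (hcont1.intervalIntegrable (0:ℝ) (π/2))
        (hcont2.intervalIntegrable (0:ℝ) (π/2))
    rw [hzero] at h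
    linarith [h]
  have hEll : Ell (-(k/s)^2)
      = ∫ x in (0:ℝ)..(π/2), Real.sqrt (1 - Real.cos x ^ 2 * k ^ 2) / s := by
    unfold Ell
    apply intervalIntegral.integral_congr
    intro θ _
    have hθ : Real.sin θ ^ 2 = 1 - Real.cos θ ^ 2 := by
      have := Real.sin_sq_add_cos_sq θ; linarith
    have haux : 1 - Real.cos θ ^ 2 * k ^ 2 = s^2 + k^2 * Real.sin θ ^ 2 := by
      linear_combination -hsk - k^2 * hθ
    have heq : 1 - (-(k/s)^2) * Real.sin θ ^ 2 = (1 - Real.cos θ ^ 2 * k ^ 2) / s ^ 2 := by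
      rw [haux]; field_simp; ring
    dsimp only
    rw [heq, Real.sqrt_div (hD θ).le, Real.sqrt_sq hs.le]
  rw [hsym, hsplit, hEll]
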